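/- Theorem 1 (coverage transfer form). Under the calibration-data setup, assume 1 ≤ ⌈(1+|I|)(1−ε)⌉ ≤ |I|. Let (Ω, P) be a probability space and let X_new : Ω → X and Y_new : Ω → Y be measurable random variables such that the event {Y_new ∈ T(X_new, f, E_1, ε)} and the event {Y_new ∈ T(X_new, f, E_max, ε)} are measurable. If P(Y_new ∈ T(X_new, f, E_1, ε)) ≥ 1 − ε, then P(Y_new ∈ T(X_new, f, E_max, ε)) ≥ 1 − ε. -/

import Mathlib

/-- The m-th smallest element (1-indexed, with multiplicity) of a finite multiset of reals. -/
noncomputable def nthSmallest (E : Multiset ℝ) (m : ℕ) : ℝ :=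
  (E.sort (· ≤ ·)).getD (m - 1) 0

/-- The critical score q(E, ε): the ⌈(1+|E|)(1−ε)⌉-th smallest element of E. -/
noncomputable def critScore (E : Multiset ℝ) (ε : ℝ) : ℝ :=
  nthSmallest E (⌈(1 + (Multiset.card E : ℝ)) * (1 - ε)⌉.toNat)

open Classical in
lemma nthSmallest_mono {ι : Type*} [Fintype ι] (a b : ι → ℝ) (hab : ∀ j, a j ≤ b j)
    (k : ℕ) (hk1 : 1 ≤ k) (hk2 : k ≤ Fintype.card ι) :
    nthSmallest (Finset.univ.val.map a) k ≤ nthSmallest (Finset.univ.val.map b) k := by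
  set s : Multiset ℝ := Finset.univ.val.map a
  set t : Multiset ℝ := Finset.univ.val.map b
  set ls := s.sort (· ≤ ·) with hls
  set lt := t.sort (· ≤ ·) with hlt
  have hlsl : ls.length = Fintype.card ι := by
    simp [hls, Multiset.length_sort, s]
  have hltl : lt.length = Fintype.card ι := by
    simp [hlt, Multiset.length_sort, t]
  have hss : ls.Pairwise (· ≤ ·) := Multiset.pairwise_sort _ _
  have hts : lt.Pairwise (· ≤ ·) := Multiset.pairwise_sort _ _
  set q : ℝ := ls.getD (k-1) 0 with hq
  show q ≤ lt.getD (k-1) 0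
  by_contra hcon
  push_neg at hcon
  set p : ℝ → Prop := fun x => x < q with hp
  -- count in t is at least k
  have hkt : k ≤ lt.countP (fun x => decide (p x)) := by
    have h1 : lt = lt.take k ++ lt.drop k := (List.take_append_drop k lt).symm
    have htk : (lt.take k).length = k := by
      rw [List.length_take]; omega
    have hall : ∀ x ∈ lt.take k, p x := by
      intro x hx
      rw [List.mem_iff_getElem] at hx
      obtain ⟨i, hi, rfl⟩ := hx
      rw [List.getElem_take]
      have hik : i < lt.length := by omega
      have : lt[i] ≤ lt[k-1] := by
        rcases eq_or_lt_of_le (by omega : i ≤ k - 1) with h | h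
        · subst h; exact le_refl _
        · exact List.Pairwise.rel_get_of_lt hts (by simpa using h)
      calc lt[i] ≤ lt[k-1] := this
        _ = lt.getD (k-1) 0 := (List.getD_eq_getElem _ _ (by omega)).symm
        _ < q := hcon
    calc k = (lt.take k).length := htk.symm
      _ = (lt.take k).countP (fun x => decide (p x)) := by
          rw [eq_comm, List.countP_eq_length]; intro x hx; simpa using hall x hx
      _ ≤ lt.countP (fun x => decide (p x)) := by
          conv_rhs => rw [h1]
          rw [List.countP_append]; omega
  -- count in s is at most k-1
  have hks : ls.countP (fun x => decide (p x)) ≤ k - 1 := by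
    have h1 : ls = ls.take (k-1) ++ ls.drop (k-1) := (List.take_append_drop (k-1) ls).symm
    have hdrop : (ls.drop (k-1)).countP (fun x => decide (p x)) = 0 := by
      rw [List.countP_eq_zero]
      intro x hx
      rw [List.mem_iff_getElem] at hx
      obtain ⟨i, hi, rfl⟩ := hx
      rw [List.getElem_drop]
      have hlen : (ls.drop (k-1)).length = ls.length - (k-1) := List.length_drop
      have hq' : q = ls[k-1]'(by omega) := List.getD_eq_getElem _ _ (by omega)
      have : ls[k-1] ≤ ls[k-1+i] := by
        rcases Nat.eq_zero_or_pos i with h | h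
        · subst h; simp
        · exact List.Pairwise.rel_get_of_lt hss (by simp; omega)
      simp only [hp, decide_eq_true_eq]
      push_neg
      rw [hq']
      exact this
    calc ls.countP (fun x => decide (p x))
        = (ls.take (k-1)).countP _ + (ls.drop (k-1)).countP _ := by
          conv_lhs => rw [h1]
          rw [List.countP_append]
      _ ≤ k - 1 := by
          rw [hdrop]
          have := List.countP_le_length (p := fun x => decide (p x)) (l := ls.take (k-1))
          rw [List.length_take] at this
          omega
  -- transfer counts through multisets and pairing
  have hcount : t.countP p ≤ s.countP p := by
    simp only [s, t, Multiset.countP_map]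
    apply Multiset.card_le_card
    rw [Multiset.le_iff_count]
    intro x
    rw [Multiset.count_filter, Multiset.count_filter]
    split_ifs with h1 h2
    · exact le_refl _
    · exact absurd (lt_of_le_of_lt (hab x) h1) h2
    · exact Nat.zero_le _
    · exact le_refl _
  have hcs : ls.countP (fun x => decide (p x)) = s.countP p := by
    rw [← Multiset.sort_eq s (· ≤ ·)]; rfl
  have hct : lt.countP (fun x => decide (p x)) = t.countP p := by
    rw [← Multiset.sort_eq t (· ≤ ·)]; rfl
  omega

open MeasureTheory

/-- E_1 := {1 − f(x_j)_{y_j} : j ∈ I} (with multiplicity). -/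
noncomputable def calE1 {X Y I : Type*} [Fintype I] (f : X → Y → ℝ) (xc : I → X)
    (yt : I → Y) : Multiset ℝ :=
  Finset.univ.val.map fun j => 1 - f (xc j) (yt j)

/-- E_max := {1 − min_{y∈S_j} f(x_j)_y : j ∈ I} (with multiplicity). -/
noncomputable def calEmax {X Y I : Type*} [Fintype I] (f : X → Y → ℝ) (xc : I → X)
    (S : I → Finset Y) (hS : ∀ j, (S j).Nonempty) : Multiset ℝ :=
  Finset.univ.val.map fun j => 1 - (S j).inf' (hS j) (f (xc j))

/-- Theorem 1 (coverage transfer form). -/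
theorem thm1_coverage {X Y I Ω : Type*} [Fintype Y] [Fintype I]
    [MeasurableSpace X] [MeasurableSpace Y] [MeasurableSpace Ω]
    (P : Measure Ω) [IsProbabilityMeasure P]
    (f : X → Y → ℝ) (xc : I → X) (S : I → Finset Y) (yt : I → Y)
    (hS : ∀ j, (S j).Nonempty) (hy : ∀ j, yt j ∈ S j)
    (ε : ℝ) (hε0 : 0 < ε) (hε1 : ε ≤ 1)
    (hk1 : 1 ≤ ⌈(1 + (Fintype.card I : ℝ)) * (1 - ε)⌉)
    (hk2 : ⌈(1 + (Fintype.card I : ℝ)) * (1 - ε)⌉ ≤ (Fintype.card I : ℤ))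
    (Xnew : Ω → X) (Ynew : Ω → Y) (hXnew : Measurable Xnew) (hYnew : Measurable Ynew)
    (hm1 : MeasurableSet
      {ω | f (Xnew ω) (Ynew ω) ≥ 1 - critScore (calE1 f xc yt) ε})
    (hm2 : MeasurableSet
      {ω | f (Xnew ω) (Ynew ω) ≥ 1 - critScore (calEmax f xc S hS) ε})
    (hcov : ENNReal.ofReal (1 - ε) ≤
      P {ω | f (Xnew ω) (Ynew ω) ≥ 1 - critScore (calE1 f xc yt) ε}) :
    ENNReal.ofReal (1 - ε) ≤
      P {ω | f (Xnew ω) (Ynew ω) ≥ 1 - critScore (calEmax f xc S hS) ε} := by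
  have hcard1 : Multiset.card (calE1 f xc yt) = Fintype.card I := by
    unfold calE1; rw [Multiset.card_map]; rfl
  have hcard2 : Multiset.card (calEmax f xc S hS) = Fintype.card I := by
    unfold calEmax; rw [Multiset.card_map]; rfl
  set k : ℕ := (⌈(1 + (Fintype.card I : ℝ)) * (1 - ε)⌉).toNat with hkdef
  have hq : critScore (calE1 f xc yt) ε ≤ critScore (calEmax f xc S hS) ε := by
    unfold critScore
    rw [hcard1, hcard2]
    exact nthSmallest_mono (fun j => 1 - f (xc j) (yt j))
      (fun j => 1 - (S j).inf' (hS j) (f (xc j)))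
      (fun j => by
        have := Finset.inf'_le (f (xc j)) (hy j)
        linarith)
      k (by omega) (by omega)
  refine le_trans hcov (measure_mono ?_)
  intro ω hω
  simp only [Set.mem_setOf_eq, ge_iff_le] at hω ⊢
  linarith
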